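/- Let A be a unital complex Banach algebra, let D, η ∈ A, let d ∈ ℝ be a scalar, and set h := d·1 + η. Then cosh(ηD)·sinh(Dd) + sinh(ηD)·cosh(Dd) = sinh(hD), where cosh(ηD) := Σ_{n≥0} η^{2n}D^{2n}/(2n)!, sinh(ηD) := Σ_{n≥0} η^{2n+1}D^{2n+1}/(2n+1)!, cosh(Dd) := Σ_{n≥0} d^{2n}D^{2n}/(2n)!, sinh(Dd) := Σ_{n≥0} d^{2n+1}D^{2n+1}/(2n+1)!, and sinh(hD) := Σ_{n≥0} h^{2n+1}D^{2n+1}/(2n+1)! (all series converge absolutely; the order of the factors matters since D and η need not commute). -/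

import Mathlib

open scoped Nat

lemma key_term (A : Type*) [NormedRing A] [NormedAlgebra ℂ A]
    (x D : A) (d : ℝ) (k : ℕ) :
    ∑ kl ∈ Finset.HasAntidiagonal.antidiagonal k,
      ((((kl.1)! : ℂ))⁻¹ • (x ^ kl.1 * D ^ kl.1)) * (((d:ℂ) ^ kl.2 / (((kl.2))! : ℂ)) • D ^ kl.2)
    = ((k ! : ℂ))⁻¹ • (((d:ℂ) • (1:A) + x) ^ k * D ^ k) := by
  have hc : Commute x ((d:ℂ) • (1:A)) := ((Commute.one_left x).smul_left _).symm
  rw [add_comm ((d:ℂ) • (1:A)) x, Finset.Nat.sum_antidiagonal_eq_sum_range_succ_mk, hc.add_pow,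
    Finset.sum_mul, Finset.smul_sum]
  refine Finset.sum_congr rfl fun i hi => ?_
  have hik : i ≤ k := Nat.lt_succ_iff.mp (Finset.mem_range.mp hi)
  have h2 : i + (k - i) = k := by omega
  have h3 : (k.choose i : ℂ) = (k ! : ℂ) / ((i)! * ((k - i))!) := Nat.cast_choose ℂ hik
  have hcast : ((k.choose i : ℕ) : A) = ((k.choose i : ℕ) : ℂ) • (1:A) := by
    rw [Nat.cast_smul_eq_nsmul, nsmul_eq_mul, mul_one]
  rw [smul_mul_smul_comm, mul_assoc (x ^ i), ← pow_add, h2, hcast]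
  simp only [smul_pow, one_pow, smul_mul_assoc, mul_smul_comm, smul_smul, one_mul, mul_one]
  congr 1
  rw [h3]
  have f1 : ((i)! : ℂ) ≠ 0 := Nat.cast_ne_zero.mpr (Nat.factorial_ne_zero _)
  have f2 : (((k-i))! : ℂ) ≠ 0 := Nat.cast_ne_zero.mpr (Nat.factorial_ne_zero _)
  have f3 : ((k)! : ℂ) ≠ 0 := Nat.cast_ne_zero.mpr (Nat.factorial_ne_zero _)
  field_simp

lemma sum_norm_aux (A : Type*) [NormedRing A] (f : ℕ → A) (r : ℝ)
    (hf : ∀ n, 1 ≤ n → ‖f n‖ ≤ r ^ n / n !) : Summable fun n => ‖f n‖ := by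
  rw [← summable_nat_add_iff 1]
  refine Summable.of_nonneg_of_le (fun _ => norm_nonneg _) (fun n => hf (n+1) (by omega)) ?_
  exact (summable_nat_add_iff 1).mpr (Real.summable_pow_div_factorial r)

lemma norm_bound1 (A : Type*) [NormedRing A] [NormedAlgebra ℂ A] (x D : A) :
    Summable fun n : ℕ => ‖((n ! : ℂ))⁻¹ • (x ^ n * D ^ n)‖ := by
  refine sum_norm_aux A _ (‖x‖ * ‖D‖) fun n hn => ?_
  rw [norm_smul, div_eq_inv_mul, mul_pow]
  have h1 : ‖((n ! : ℂ))⁻¹‖ = ((n ! : ℝ))⁻¹ := by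
    rw [norm_inv, Complex.norm_natCast]
  rw [h1]
  gcongr
  calc ‖x ^ n * D ^ n‖ ≤ ‖x ^ n‖ * ‖D ^ n‖ := norm_mul_le _ _
    _ ≤ ‖x‖ ^ n * ‖D‖ ^ n := by gcongr <;> exact norm_pow_le' _ (by omega)

lemma norm_bound2 (A : Type*) [NormedRing A] [NormedAlgebra ℂ A] (d : ℝ) (D : A) :
    Summable fun n : ℕ => ‖((d:ℂ) ^ n / (n ! : ℂ)) • D ^ n‖ := by
  refine sum_norm_aux A _ (|d| * ‖D‖) fun n hn => ?_
  rw [norm_smul, mul_pow]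
  have h1 : ‖(d:ℂ) ^ n / ((n ! : ℂ))‖ = |d| ^ n / (n ! : ℝ) := by
    rw [norm_div, norm_pow, Complex.norm_real, Complex.norm_natCast, Real.norm_eq_abs]
  rw [h1, div_mul_eq_mul_div]
  gcongr
  exact norm_pow_le' _ (by omega)

lemma combine (A : Type*) [NormedRing A] [NormedAlgebra ℂ A] [CompleteSpace A]
    (f g c : ℕ → A)
    (hf : Summable fun n => ‖f n‖) (hg : Summable fun n => ‖g n‖)
    (hc : Summable fun n => ‖c n‖)
    (P1 : (∑' n, f n) * (∑' n, g n) = ∑' n, c n)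
    (P2 : (∑' n, ((-1:ℂ))^n • f n) * (∑' n, ((-1:ℂ))^n • g n) = ∑' n, ((-1:ℂ))^n • c n) :
    (∑' n, f (2*n)) * (∑' n, g (2*n+1)) + (∑' n, f (2*n+1)) * (∑' n, g (2*n))
      = ∑' n, c (2*n+1) := by
  have inj2 : Function.Injective (fun n : ℕ => 2 * n) := fun a b hab => by
    simp only at hab; omega
  have inj2' : Function.Injective (fun n : ℕ => 2 * n + 1) := fun a b hab => by
    simp only at hab; omega
  have evenodd : ∀ u : ℕ → A, Summable (fun n => ‖u n‖) →
      ((∑' n, u (2*n)) + (∑' n, u (2*n+1)) = ∑' n, u n) ∧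
      ((∑' n, u (2*n)) - (∑' n, u (2*n+1)) = ∑' n, ((-1:ℂ))^n • u n) := by
    intro u hu
    have hsu : Summable u := hu.of_norm
    have hsu' : Summable fun n => ((-1:ℂ))^n • u n := by
      apply Summable.of_norm
      simpa [norm_smul] using hu
    constructor
    · have he : Summable fun k : ℕ => u (2 * k) := hsu.comp_injective inj2
      have ho : Summable fun k : ℕ => u (2 * k + 1) := hsu.comp_injective inj2'
      exact tsum_even_add_odd (f := u) he ho
    · have h1 : (∑' n, ((-1:ℂ))^(2*n) • u (2*n)) + (∑' n, ((-1:ℂ))^(2*n+1) • u (2*n+1))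
          = ∑' n, ((-1:ℂ))^n • u n :=
        by
          have he : Summable fun k : ℕ => ((-1:ℂ))^(2*k) • u (2*k) := hsu'.comp_injective inj2
          have ho : Summable fun k : ℕ => ((-1:ℂ))^(2*k+1) • u (2*k+1) := hsu'.comp_injective inj2'
          exact tsum_even_add_odd (f := fun n => ((-1:ℂ))^n • u n) he ho
      rw [← h1]
      have h2 : (∑' n, ((-1:ℂ))^(2*n) • u (2*n)) = ∑' n, u (2*n) :=
        tsum_congr fun n => by simp [pow_mul]
      have h3 : (∑' n, ((-1:ℂ))^(2*n+1) • u (2*n+1)) = -∑' n, u (2*n+1) := by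
        rw [← tsum_neg]
        exact tsum_congr fun n => by simp [pow_succ, pow_mul]
      rw [h2, h3, sub_eq_add_neg]
  obtain ⟨ef1, ef2⟩ := evenodd f hf
  obtain ⟨eg1, eg2⟩ := evenodd g hg
  obtain ⟨ec1, ec2⟩ := evenodd c hc
  set cA := ∑' n, f (2*n); set sA := ∑' n, f (2*n+1)
  set cB := ∑' n, g (2*n); set sB := ∑' n, g (2*n+1)
  set cC := ∑' n, c (2*n); set sC := ∑' n, c (2*n+1)
  have main2 : (cA*sB + sA*cB) + (cA*sB + sA*cB) = sC + sC := by
    have l1 : (cA*sB + sA*cB) + (cA*sB + sA*cB) = (cA+sA)*(cB+sB) - (cA-sA)*(cB-sB) := by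
      noncomm_ring
    have l2 : sC + sC = (cC + sC) - (cC - sC) := by abel
    rw [l1, l2, ef1, ef2, eg1, eg2, ec1, ec2, P1, P2]
  refine smul_right_injective A (show (2:ℂ) ≠ 0 by norm_num) ?_
  show (2:ℂ) • (cA*sB + sA*cB) = (2:ℂ) • sC
  rw [two_smul ℂ, two_smul ℂ]
  exact main2

/-- Constant-depth identity `cosh(ηD)·sinh(Dd) + sinh(ηD)·cosh(Dd) = sinh(hD)`
in a unital complex Banach algebra, with `h = d·1 + η`. -/
theorem stmt_2 (A : Type*) [NormedRing A] [NormedAlgebra ℂ A] [CompleteSpace A]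
    (D η : A) (d : ℝ) (h : A) (hdef : h = (d : ℂ) • (1 : A) + η) :
    (Summable fun n : ℕ => ‖(((2 * n)! : ℂ))⁻¹ • (η ^ (2 * n) * D ^ (2 * n))‖) ∧
    (Summable fun n : ℕ => ‖(((2 * n + 1)! : ℂ))⁻¹ • (η ^ (2 * n + 1) * D ^ (2 * n + 1))‖) ∧
    (Summable fun n : ℕ => ‖((d : ℂ) ^ (2 * n) / ((2 * n)! : ℂ)) • D ^ (2 * n)‖) ∧
    (Summable fun n : ℕ => ‖((d : ℂ) ^ (2 * n + 1) / ((2 * n + 1)! : ℂ)) • D ^ (2 * n + 1)‖) ∧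
    (Summable fun n : ℕ => ‖(((2 * n + 1)! : ℂ))⁻¹ • (h ^ (2 * n + 1) * D ^ (2 * n + 1))‖) ∧
    (∑' n : ℕ, (((2 * n)! : ℂ))⁻¹ • (η ^ (2 * n) * D ^ (2 * n))) *
        (∑' n : ℕ, ((d : ℂ) ^ (2 * n + 1) / ((2 * n + 1)! : ℂ)) • D ^ (2 * n + 1)) +
      (∑' n : ℕ, (((2 * n + 1)! : ℂ))⁻¹ • (η ^ (2 * n + 1) * D ^ (2 * n + 1))) *
        (∑' n : ℕ, ((d : ℂ) ^ (2 * n) / ((2 * n)! : ℂ)) • D ^ (2 * n)) =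
      ∑' n : ℕ, (((2 * n + 1)! : ℂ))⁻¹ • (h ^ (2 * n + 1) * D ^ (2 * n + 1)) := by
  subst hdef
  have hA : Summable fun n : ℕ => ‖((n ! : ℂ))⁻¹ • (η ^ n * D ^ n)‖ := norm_bound1 A η D
  have hB : Summable fun n : ℕ => ‖((d:ℂ) ^ n / (n ! : ℂ)) • D ^ n‖ := norm_bound2 A d D
  have hC : Summable fun n : ℕ =>
      ‖((n ! : ℂ))⁻¹ • (((d : ℂ) • (1 : A) + η) ^ n * D ^ n)‖ := norm_bound1 A _ D
  have hA' : Summable fun n : ℕ => ‖((-1:ℂ))^n • (((n ! : ℂ))⁻¹ • (η ^ n * D ^ n))‖ := by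
    simpa [norm_smul] using hA
  have hB' : Summable fun n : ℕ => ‖((-1:ℂ))^n • (((d:ℂ) ^ n / (n ! : ℂ)) • D ^ n)‖ := by
    simpa [norm_smul] using hB
  have inj2 : Function.Injective (fun n : ℕ => 2 * n) := fun a b hab => by
    simp only at hab; omega
  have inj2' : Function.Injective (fun n : ℕ => 2 * n + 1) := fun a b hab => by
    simp only at hab; omega
  have P1 : (∑' n : ℕ, ((n ! : ℂ))⁻¹ • (η ^ n * D ^ n)) *
      (∑' n : ℕ, ((d:ℂ) ^ n / (n ! : ℂ)) • D ^ n)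
      = ∑' n : ℕ, ((n ! : ℂ))⁻¹ • (((d : ℂ) • (1 : A) + η) ^ n * D ^ n) := by
    rw [tsum_mul_tsum_eq_tsum_sum_antidiagonal_of_summable_norm hA hB]
    exact tsum_congr fun k => key_term A η D d k
  have P2 : (∑' n : ℕ, ((-1:ℂ))^n • (((n ! : ℂ))⁻¹ • (η ^ n * D ^ n))) *
      (∑' n : ℕ, ((-1:ℂ))^n • (((d:ℂ) ^ n / (n ! : ℂ)) • D ^ n))
      = ∑' n : ℕ, ((-1:ℂ))^n • (((n ! : ℂ))⁻¹ • (((d : ℂ) • (1 : A) + η) ^ n * D ^ n)) := by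
    rw [tsum_mul_tsum_eq_tsum_sum_antidiagonal_of_summable_norm hA' hB']
    refine tsum_congr fun k => ?_
    rw [← key_term A η D d k, Finset.smul_sum]
    refine Finset.sum_congr rfl fun kl hkl => ?_
    have hk : kl.1 + kl.2 = k := by simpa using Finset.HasAntidiagonal.mem_antidiagonal.mp hkl
    rw [smul_mul_smul_comm, ← pow_add, hk]
  refine ⟨hA.comp_injective inj2, hA.comp_injective inj2', hB.comp_injective inj2,
    hB.comp_injective inj2', hC.comp_injective inj2', ?_⟩
  exact combine A (fun n => ((n ! : ℂ))⁻¹ • (η ^ n * D ^ n))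
    (fun n => ((d:ℂ) ^ n / (n ! : ℂ)) • D ^ n)
    (fun n => ((n ! : ℂ))⁻¹ • (((d : ℂ) • (1 : A) + η) ^ n * D ^ n)) hA hB hC P1 P2
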